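/- (Spectral radius of the 2×2 propagation block.) Let h > 0 and a, b, g, λ be real numbers with λ ≥ 0, and define B := (h/2)(bλ + a), A := h² g λ, C := B² − A. Consider the 2×2 real matrix M with rows (1 − h b λ, h) and (h(a b − g) λ, 1 − a h). Then the characteristic polynomial of M is X² − (2 − 2B) X + (1 − 2B + A). Moreover: if C ≥ 0 then the eigenvalues of M are the real numbers (1 − B) + √C and (1 − B) − √C and the spectral radius of M equals |1 − B| + √C; if C < 0 then the eigenvalues of M are a pair of non-real complex conjugates, 1 − 2B + A > 0, and the spectral radius of M equals √(1 − 2B + A). -/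

import Mathlib

open Polynomial

lemma spec2 (N : Matrix (Fin 2) (Fin 2) ℂ) (z : ℂ) :
    z ∈ spectrum ℂ N ↔ (z - N 0 0) * (z - N 1 1) - N 0 1 * N 1 0 = 0 := by
  rw [spectrum.mem_iff, Matrix.isUnit_iff_isUnit_det, isUnit_iff_ne_zero, not_not]
  have : (algebraMap ℂ (Matrix (Fin 2) (Fin 2) ℂ) z - N).det
      = (z - N 0 0) * (z - N 1 1) - N 0 1 * N 1 0 := by
    simp [Matrix.det_fin_two, Matrix.algebraMap_matrix_apply]
  rw [this]

/-- Spectral radius of the 2×2 propagation block. -/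
theorem stmt_7 (h a b g l : ℝ) (hh : 0 < h) (hl : 0 ≤ l)
    (B A C : ℝ) (hB : B = (h / 2) * (b * l + a)) (hA : A = h ^ 2 * g * l)
    (hC : C = B ^ 2 - A)
    (M : Matrix (Fin 2) (Fin 2) ℝ)
    (hM : M = !![1 - h * b * l, h; h * (a * b - g) * l, 1 - a * h]) :
    M.charpoly = X ^ 2 - Polynomial.C (2 - 2 * B) * X + Polynomial.C (1 - 2 * B + A)
    ∧ (0 ≤ C →
        spectrum ℂ (M.map (algebraMap ℝ ℂ))
            = {((1 - B + Real.sqrt C : ℝ) : ℂ), ((1 - B - Real.sqrt C : ℝ) : ℂ)}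
        ∧ IsGreatest ((fun z : ℂ => ‖z‖) '' spectrum ℂ (M.map (algebraMap ℝ ℂ)))
            (|1 - B| + Real.sqrt C))
    ∧ (C < 0 →
        (∃ z : ℂ, z.im ≠ 0 ∧
          spectrum ℂ (M.map (algebraMap ℝ ℂ)) = {z, (starRingEnd ℂ) z})
        ∧ 0 < 1 - 2 * B + A
        ∧ IsGreatest ((fun z : ℂ => ‖z‖) '' spectrum ℂ (M.map (algebraMap ℝ ℂ)))
            (Real.sqrt (1 - 2 * B + A))) := by
  have hCc : (C : ℂ) = (B : ℂ) ^ 2 - (A : ℂ) := by exact_mod_cast hC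
  have e00 : M 0 0 = 1 - h * b * l := by rw [hM]; rfl
  have e01 : M 0 1 = h := by rw [hM]; rfl
  have e10 : M 1 0 = h * (a * b - g) * l := by rw [hM]; rfl
  have e11 : M 1 1 = 1 - a * h := by rw [hM]; rfl
  have key : ∀ z : ℂ, z ∈ spectrum ℂ (M.map (algebraMap ℝ ℂ)) ↔
      z ^ 2 - ((2 - 2 * B : ℝ) : ℂ) * z + ((1 - 2 * B + A : ℝ) : ℂ) = 0 := by
    intro z
    rw [spec2]
    have he : ∀ i j, (M.map (algebraMap ℝ ℂ)) i j = ((M i j : ℝ) : ℂ) := by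
      intro i j; simp [Matrix.map_apply, Complex.coe_algebraMap]
    rw [he, he, he, he, e00, e01, e10, e11]
    have : (z - ((1 - h * b * l : ℝ) : ℂ)) * (z - ((1 - a * h : ℝ) : ℂ))
          - ((h : ℝ) : ℂ) * ((h * (a * b - g) * l : ℝ) : ℂ)
        = z ^ 2 - ((2 - 2 * B : ℝ) : ℂ) * z + ((1 - 2 * B + A : ℝ) : ℂ) := by
      push_cast [hB, hA]
      ring
    rw [this]
  refine ⟨?_, ?_, ?_⟩
  · rw [Matrix.charpoly, Matrix.det_fin_two, Matrix.charmatrix_apply_eq,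
      Matrix.charmatrix_apply_eq, Matrix.charmatrix_apply_ne _ _ _ (by decide),
      Matrix.charmatrix_apply_ne _ _ _ (by decide), e00, e01, e10, e11]
    have h2B : 2 - 2 * B = 2 - h * b * l - a * h := by rw [hB]; ring
    have h1BA : 1 - 2 * B + A = (1 - h * b * l) * (1 - a * h) - h * (h * (a * b - g) * l) := by
      rw [hB, hA]; ring
    rw [h2B, h1BA]
    simp only [map_sub, map_add, map_mul, map_one, map_ofNat]
    ring
  · intro hC0
    have hspec : spectrum ℂ (M.map (algebraMap ℝ ℂ))
        = {((1 - B + Real.sqrt C : ℝ) : ℂ), ((1 - B - Real.sqrt C : ℝ) : ℂ)} := by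
      ext z
      rw [key z]
      have hsC : ((Real.sqrt C : ℝ) : ℂ) ^ 2 = (C : ℂ) := by
        exact_mod_cast congrArg (Complex.ofReal) (Real.sq_sqrt hC0)
      have hfac : z ^ 2 - ((2 - 2 * B : ℝ) : ℂ) * z + ((1 - 2 * B + A : ℝ) : ℂ)
          = (z - ((1 - B + Real.sqrt C : ℝ) : ℂ)) * (z - ((1 - B - Real.sqrt C : ℝ) : ℂ)) := by
        push_cast
        linear_combination hsC + hCc
      rw [hfac, mul_eq_zero, sub_eq_zero, sub_eq_zero]
      simp [Set.mem_insert_iff]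
    refine ⟨hspec, ?_⟩
    rw [hspec]
    have hs0 : 0 ≤ Real.sqrt C := Real.sqrt_nonneg C
    rw [Set.image_insert_eq, Set.image_singleton, Complex.norm_real, Complex.norm_real,
      Real.norm_eq_abs, Real.norm_eq_abs]
    constructor
    · rcases le_or_gt 0 (1 - B) with h1 | h1
      · left
        rw [abs_of_nonneg h1, abs_of_nonneg (show (0:ℝ) ≤ 1 - B + Real.sqrt C by linarith)]
      · right
        rw [abs_of_neg h1, abs_of_nonpos (show 1 - B - Real.sqrt C ≤ 0 by linarith)]
        exact Set.mem_singleton_iff.mpr (by ring)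
    · rintro x hx
      rcases hx with rfl | hx
      · calc |1 - B + Real.sqrt C| ≤ |1 - B| + |Real.sqrt C| := abs_add_le _ _
          _ = |1 - B| + Real.sqrt C := by rw [abs_of_nonneg hs0]
      · rw [Set.mem_singleton_iff] at hx
        subst hx
        calc |1 - B - Real.sqrt C| = |1 - B + -Real.sqrt C| := by ring_nf
          _ ≤ |1 - B| + |-Real.sqrt C| := abs_add_le _ _
          _ = |1 - B| + Real.sqrt C := by rw [abs_neg, abs_of_nonneg hs0]
  · intro hClt
    have hnC : (0 : ℝ) ≤ -C := by linarith
    have hsq : Real.sqrt (-C) ^ 2 = -C := Real.sq_sqrt hnC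
    set s : ℝ := Real.sqrt (-C) with hs
    have hspos : 0 < s := Real.sqrt_pos.mpr (by linarith)
    set z0 : ℂ := ((1 - B : ℝ) : ℂ) + (s : ℂ) * Complex.I with hz0
    have hconj : (starRingEnd ℂ) z0 = ((1 - B : ℝ) : ℂ) - (s : ℂ) * Complex.I := by
      simp [hz0, Complex.conj_ofReal]
      ring
    have hsC2 : ((s : ℝ) : ℂ) ^ 2 = -(C : ℂ) := by
      exact_mod_cast congrArg (Complex.ofReal) hsq
    have hspec : spectrum ℂ (M.map (algebraMap ℝ ℂ)) = {z0, (starRingEnd ℂ) z0} := by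
      ext z
      rw [key z]
      have hfac : z ^ 2 - ((2 - 2 * B : ℝ) : ℂ) * z + ((1 - 2 * B + A : ℝ) : ℂ)
          = (z - z0) * (z - (starRingEnd ℂ) z0) := by
        rw [hconj, hz0]
        push_cast
        linear_combination ((s : ℂ) ^ 2) * Complex.I_sq - hsC2 + hCc
      rw [hfac, mul_eq_zero, sub_eq_zero, sub_eq_zero]
      simp [Set.mem_insert_iff]
    have hpos : 0 < 1 - 2 * B + A := by nlinarith [sq_nonneg (1 - B)]
    have habs : ‖z0‖ = Real.sqrt (1 - 2 * B + A) := by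
      rw [Complex.norm_def]
      congr 1
      have h1 : z0.re = 1 - B := by simp [hz0]
      have h2 : z0.im = s := by simp [hz0]
      rw [Complex.normSq_apply, h1, h2]
      nlinarith [hsq]
    have him : z0.im ≠ 0 := by
      have : z0.im = s := by simp [hz0]
      rw [this]
      exact hspos.ne'
    refine ⟨⟨z0, him, hspec⟩, hpos, ?_⟩
    rw [hspec]
    constructor
    · exact ⟨z0, Or.inl rfl, habs⟩
    · rintro x ⟨w, hw, rfl⟩
      rcases hw with rfl | hw
      · rw [show (fun z : ℂ => ‖z‖) z0 = ‖z0‖ from rfl, habs]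
      · rw [Set.mem_singleton_iff] at hw
        subst hw
        rw [show (fun z : ℂ => ‖z‖) ((starRingEnd ℂ) z0) = ‖(starRingEnd ℂ) z0‖ from rfl,
          Complex.norm_conj, habs]
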